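/- For a partition ρ of n, the quantity Σ_{1≤i<j≤ℓ(ρ)} gcd(ρ_i, ρ_j) + Σ_i ⌊(ρ_i − 1)/2⌋ is at most n(n−1)/2, with equality if and only if ρ = (1,1,...,1). -/

import Mathlib

lemma sq_sum_aux : ∀ (ℓ : ℕ) (f : Fin ℓ → ℕ),
    (∑ i, f i) ^ 2 = 2 * (∑ i : Fin ℓ, ∑ j ∈ Finset.Ioi i, f i * f j) + ∑ i, (f i) ^ 2 := by
  intro ℓ
  induction ℓ with
  | zero => simp
  | succ m ih =>
    intro f
    rw [Fin.sum_univ_succ f,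
      Fin.sum_univ_succ (fun i => ∑ j ∈ Finset.Ioi i, f i * f j),
      Fin.sum_univ_succ (fun i => f i ^ 2)]
    have h0 : ∑ j ∈ Finset.Ioi (0 : Fin (m+1)), f 0 * f j
        = f 0 * ∑ j : Fin m, f j.succ := by
      rw [Fin.sum_Ioi_zero, Finset.mul_sum]
    have h1 : ∀ i : Fin m, ∑ j ∈ Finset.Ioi i.succ, f i.succ * f j
        = ∑ j ∈ Finset.Ioi i, f i.succ * f j.succ := fun i => Fin.sum_Ioi_succ (fun j => f i.succ * f j) i
    simp only [h0, h1]
    have := ih (fun i => f i.succ)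
    nlinarith [this]

/-- for a partition `ρ = (ρ₁, …, ρ_ℓ)` of `n`, the quantity
`Σ_{i<j} gcd(ρ_i, ρ_j) + Σ_i ⌊(ρ_i − 1)/2⌋` is at most `n(n−1)/2`, with equality if and
only if `ρ = (1, 1, …, 1)`. -/
theorem stmt13 (n ℓ : ℕ) (ρ : Fin ℓ → ℕ) (hpos : ∀ i, 0 < ρ i)
    (hsum : ∑ i, ρ i = n) :
    (∑ i : Fin ℓ, ∑ j ∈ Finset.Ioi i, Nat.gcd (ρ i) (ρ j)) +
        (∑ i : Fin ℓ, (ρ i - 1) / 2) ≤ n * (n - 1) / 2 ∧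
      ((∑ i : Fin ℓ, ∑ j ∈ Finset.Ioi i, Nat.gcd (ρ i) (ρ j)) +
          (∑ i : Fin ℓ, (ρ i - 1) / 2) = n * (n - 1) / 2 ↔ ∀ i, ρ i = 1) := by
  set A := ∑ i : Fin ℓ, ∑ j ∈ Finset.Ioi i, Nat.gcd (ρ i) (ρ j) with hA
  set B := ∑ i : Fin ℓ, (ρ i - 1) / 2 with hB
  set P := ∑ i : Fin ℓ, ∑ j ∈ Finset.Ioi i, ρ i * ρ j with hP
  set Q := ∑ i : Fin ℓ, ρ i * (ρ i - 1) with hQ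
  -- key identity: 2 * P + Q = n * (n - 1)
  have hsq := sq_sum_aux ℓ ρ
  rw [hsum] at hsq
  have hQsum : Q + n = ∑ i, (ρ i) ^ 2 := by
    rw [← hsum, ← Finset.sum_add_distrib]
    refine Finset.sum_congr rfl fun i _ => ?_
    have h1 : ρ i * (ρ i - 1) + ρ i = ρ i * (ρ i - 1 + 1) := by ring
    rw [h1, Nat.sub_add_cancel (hpos i), pow_two]
  have hkey : 2 * P + Q = n * (n - 1) := by
    have hn1 : n * (n - 1) = n ^ 2 - n := by
      cases n with
      | zero => simp
      | succ m => simp [pow_two]; ring_nf; omega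
    omega
  -- termwise bounds
  have hAP : A ≤ P := by
    refine Finset.sum_le_sum fun i _ => Finset.sum_le_sum fun j _ => ?_
    calc Nat.gcd (ρ i) (ρ j) ≤ ρ j := Nat.gcd_le_right _ (hpos j)
      _ ≤ ρ i * ρ j := Nat.le_mul_of_pos_left _ (hpos i)
  have hBQ : ∀ i : Fin ℓ, 2 * ((ρ i - 1) / 2) ≤ ρ i * (ρ i - 1) := by
    intro i
    have h1 : 2 * ((ρ i - 1) / 2) ≤ ρ i - 1 := Nat.mul_div_le _ 2
    have h2 : ρ i - 1 ≤ ρ i * (ρ i - 1) := Nat.le_mul_of_pos_left _ (hpos i)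
    omega
  have h2B : 2 * B ≤ Q := by
    rw [hB, hQ, Finset.mul_sum]
    exact Finset.sum_le_sum fun i _ => hBQ i
  have hmain : 2 * (A + B) ≤ n * (n - 1) := by omega
  have hdvd : 2 ∣ n * (n - 1) := by
    rcases Nat.even_or_odd n with h | h
    · exact Dvd.dvd.mul_right h.two_dvd _
    · cases n with
      | zero => simp
      | succ m =>
        have hm : Even m := by
          rcases h with ⟨k, hk⟩
          exact ⟨k, by omega⟩
        simp only [Nat.add_sub_cancel]
        exact Dvd.dvd.mul_left hm.two_dvd _
  constructor
  · exact Nat.le_div_iff_mul_le (by norm_num) |>.mpr (by omega)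
  constructor
  · intro heq
    by_contra hne
    push_neg at hne
    obtain ⟨i₀, hi₀⟩ := hne
    have hge2 : 2 ≤ ρ i₀ := by have := hpos i₀; omega
    have hstrict : 2 * B < Q := by
      rw [hB, hQ, Finset.mul_sum]
      refine Finset.sum_lt_sum (fun i _ => hBQ i) ⟨i₀, Finset.mem_univ _, ?_⟩
      have h1 : 2 * ((ρ i₀ - 1) / 2) ≤ ρ i₀ - 1 := Nat.mul_div_le _ 2
      have h2 : 2 * (ρ i₀ - 1) ≤ ρ i₀ * (ρ i₀ - 1) :=
        Nat.mul_le_mul_right _ hge2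
      omega
    have : 2 * (A + B) = n * (n - 1) := by
      rw [heq] at *
      obtain ⟨k, hk⟩ := hdvd
      omega
    omega
  · intro hall
    have hAeq : A = P := by
      rw [hA, hP]
      refine Finset.sum_congr rfl fun i _ => Finset.sum_congr rfl fun j _ => ?_
      simp [hall i, hall j]
    have hBeq : B = 0 := by
      rw [hB]
      exact Finset.sum_eq_zero fun i _ => by simp [hall i]
    have hQeq : Q = 0 := by
      rw [hQ]
      exact Finset.sum_eq_zero fun i _ => by simp [hall i]
    obtain ⟨k, hk⟩ := hdvd
    omega
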